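/- Under the standing hypotheses, for any subgroupoid H of G the map σ : h ↦ J_h is injective on the set S_H = {h ∈ H | J_h ≠ 0}; that is, if g, h ∈ H satisfy J_g = J_h ≠ {0}, then g = h. -/

import Mathlib

open scoped BigOperators

attribute [local instance] Classical.propDecidable

universe u v w

/-- A groupoid in the sense of Lawson: a (nonempty) set `G` with a partially defined
binary operation (here totalized: `mul g h` is only meaningful when `d g = r h`),
inverses, and one-sided identities `r g = g * g⁻¹` and `d g = g⁻¹ * g`. -/
structure Gpd (G : Type*) where
  d : G → G
  r : G → G
  mul : G → G → G
  inv : G → G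
  assoc : ∀ g h l, d g = r h → d h = r l → mul (mul g h) l = mul g (mul h l)
  d_mul : ∀ g h, d g = r h → d (mul g h) = d h
  r_mul : ∀ g h, d g = r h → r (mul g h) = r g
  d_inv : ∀ g, d (inv g) = r g
  r_inv : ∀ g, r (inv g) = d g
  inv_inv : ∀ g, inv (inv g) = g
  mul_inv : ∀ g, mul g (inv g) = r g
  inv_mul : ∀ g, mul (inv g) g = d g
  mul_d : ∀ g, mul g (d g) = g
  r_mul_self : ∀ g, mul (r g) g = g
  d_d : ∀ g, d (d g) = d g
  r_d : ∀ g, r (d g) = d g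
  inv_d : ∀ g, inv (d g) = d g

namespace Gpd

variable {G : Type*} (gpd : Gpd G)

/-- The set `G₀` of identities of the groupoid. -/
def idts : Set G := Set.range gpd.d

/-- `H` is a subgroupoid: a nonempty subset closed under inverses and under all
defined products. -/
def IsSubgpd (H : Set G) : Prop :=
  H.Nonempty ∧ (∀ g ∈ H, gpd.inv g ∈ H) ∧
    ∀ g ∈ H, ∀ h ∈ H, gpd.d g = gpd.r h → gpd.mul g h ∈ H

/-- A wide subgroupoid: a subgroupoid containing all the identities of `G`. -/
def IsWide (H : Set G) : Prop := gpd.IsSubgpd H ∧ gpd.idts ⊆ H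

/-- The subgroupoid generated by a subset `X` of `G`: the intersection of all
subgroupoids containing `X`. -/
def gen (X : Set G) : Set G := ⋂₀ {H : Set G | gpd.IsSubgpd H ∧ X ⊆ H}

end Gpd

/-- A unital action `β` of a groupoid `gpd` on a `K`-algebra `R`.  Each ideal
`E_g = E_{r g}` is the unital ideal `R·(one g)` generated by the central idempotent
`one g` (the identity element `1_g` of `E_g`), and `act g` encodes the `K`-algebra
isomorphism `β_g : E_{g⁻¹} → E_g` (only the values `act g (x * one (inv g))` on
`E_{g⁻¹}` are relevant). -/
structure GpdAct (K : Type*) [CommRing K] (R : Type*) [Ring R] [Algebra K R]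
    {G : Type*} (gpd : Gpd G) where
  one : G → R
  one_central : ∀ g x, one g * x = x * one g
  one_idem : ∀ g, one g * one g = one g
  one_r : ∀ g, one g = one (gpd.r g)
  act : G → R → R
  act_mem : ∀ g x, act g (x * one (gpd.inv g)) * one g = act g (x * one (gpd.inv g))
  act_add : ∀ g x y, act g ((x + y) * one (gpd.inv g)) =
      act g (x * one (gpd.inv g)) + act g (y * one (gpd.inv g))
  act_mul : ∀ g x y, act g (x * y * one (gpd.inv g)) =
      act g (x * one (gpd.inv g)) * act g (y * one (gpd.inv g))
  act_smul : ∀ g (k : K) (x : R),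
      act g (k • x * one (gpd.inv g)) = k • act g (x * one (gpd.inv g))
  act_unit : ∀ g, act g (one (gpd.inv g)) = one g
  act_id : ∀ g x, act (gpd.d g) (x * one (gpd.d g)) = x * one (gpd.d g)
  act_comp : ∀ g h x, gpd.d g = gpd.r h →
      act g (act h (x * one (gpd.inv h)) * one (gpd.inv g)) =
        act (gpd.mul g h) (x * one (gpd.inv h))

section Defs

variable {K : Type*} [CommRing K] {R : Type*} [Ring R] [Algebra K R]
  {G : Type*} (gpd : Gpd G) (β : GpdAct K R gpd)

/-- The invariants `R^{β_H}` of `R` under the restriction of the action to a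
subset `H` of `G`: all `x` with `β_h(x 1_{h⁻¹}) = x 1_h` for all `h ∈ H`. -/
def fixedSet (H : Set G) : Set R :=
  {x : R | ∀ h ∈ H, β.act h (x * β.one (gpd.inv h)) = x * β.one h}

/-- `J_g = {t ∈ E_g | t β_g(x 1_{g⁻¹}) = x t for all x ∈ R}`. -/
def Jset (g : G) : Set R :=
  {t : R | t * β.one g = t ∧ ∀ x : R, t * β.act g (x * β.one (gpd.inv g)) = x * t}

/-- `H_S = {g ∈ G | β_g(s 1_{g⁻¹}) = s 1_g for all s ∈ S}`. -/
def Hset (S : Set R) : Set G :=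
  {g : G | ∀ s ∈ S, β.act g (s * β.one (gpd.inv g)) = s * β.one g}

/-- `R = ⊕_{e ∈ G₀} E_e`, i.e. the identity elements of the ideals `E_e`, `e ∈ G₀`,
are pairwise orthogonal central idempotents summing to `1`. -/
def IsDecomp [Fintype G] : Prop :=
  (∑ e : G, if e ∈ gpd.idts then β.one e else 0) = 1 ∧
    ∀ e f : G, e ∈ gpd.idts → f ∈ gpd.idts → e ≠ f → β.one e * β.one f = 0

/-- `R` is a `β`-Galois extension of `R^β`: there is a Galois coordinate system
`x_i, y_i` with `Σ_i x_i β_g(y_i 1_{g⁻¹}) = δ_{e,g} 1_e` for all `e ∈ G₀`, `g ∈ G`. -/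
def IsGaloisExt [Fintype G] : Prop :=
  ∃ (n : ℕ) (x y : Fin n → R), ∀ g : G,
    (∑ i, x i * β.act g (y i * β.one (gpd.inv g))) = if g ∈ gpd.idts then β.one g else 0

/-- `V = ⊕_{g ∈ H} J_g`: every family `(f g)_{g ∈ H}` with `f g ∈ J_g` sums into `V`,
and every element of `V` is in a unique way such a sum (internal direct sum). -/
def IsDirectSumOver [Fintype G] (H : Set G) (V : Set R) : Prop :=
  (∀ f : G → R, (∀ g, f g ∈ Jset gpd β g) → (∀ g, g ∉ H → f g = 0) → (∑ g, f g) ∈ V) ∧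
    ∀ v ∈ V, ∃! f : G → R,
      (∀ g, f g ∈ Jset gpd β g) ∧ (∀ g, g ∉ H → f g = 0) ∧ v = ∑ g, f g

/-- `γ(H) = ⊕_{h ∈ H} J_h`, as the set of all sums `Σ_{h ∈ H} j_h`, `j_h ∈ J_h`. -/
def gammaSet [Fintype G] (H : Set G) : Set R :=
  {v : R | ∃ f : G → R,
    (∀ g, f g ∈ Jset gpd β g) ∧ (∀ g, g ∉ H → f g = 0) ∧ v = ∑ g, f g}

/-- The product `J_h J_g`: all finite sums of products `a b` with `a ∈ J_h`, `b ∈ J_g`. -/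
def JprodSet (h g : G) : Set R :=
  {z : R | ∃ (n : ℕ) (a b : Fin n → R),
    (∀ i, a i ∈ Jset gpd β h) ∧ (∀ i, b i ∈ Jset gpd β g) ∧ z = ∑ i, a i * b i}

end Defs

section Sep

variable {R : Type u} [Ring R]

/-- A biadditive pairing `φ : R × R → N` is `S`-balanced if `φ(u s, v) = φ(u, s v)`
for all `s ∈ S`.  Such pairings are exactly the additive maps out of `R ⊗_S R`,
so they detect equality in `R ⊗_S R`. -/
def IsBalanced (S : Set R) {N : Type v} [AddCommGroup N] (φ : R →+ R →+ N) : Prop :=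
  ∀ u v s : R, s ∈ S → φ (u * s) v = φ u (s * v)

/-- `R` is a separable extension of the subring `S ⊆ R`: there is
`z = Σ_i x_i ⊗ y_i ∈ R ⊗_S R` with `Σ_i x_i y_i = 1` and `a z = z a` for all `a ∈ R`
(the latter expressed via all `S`-balanced pairings, which detect equality in
`R ⊗_S R`). -/
def RSepOver (S : Set R) : Prop :=
  ∃ (n : ℕ) (x y : Fin n → R), (∑ i, x i * y i) = 1 ∧
    ∀ (N : Type v) [AddCommGroup N] (φ : R →+ R →+ N), IsBalanced S φ →
      ∀ a : R, (∑ i, φ (a * x i) (y i)) = ∑ i, φ (x i) (y i * a)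

/-- `R` is a Hirata separable extension of `S`: `R ⊗_S R` is isomorphic as an
`R`-bimodule to a direct summand of a finite direct sum of copies of `R`.
Equivalently (Casimir elements): there are `R`-central elements
`e_k = Σ_i x_{k,i} ⊗ y_{k,i} ∈ (R ⊗_S R)^R` and `a_k ∈ V_R(S)` with
`Σ_k a_k e_k = 1 ⊗ 1` (centrality and the last equation expressed via all
`S`-balanced pairings, which detect equality in `R ⊗_S R`). -/
def HirataSep (S : Set R) : Prop :=
  ∃ (n m : ℕ) (x y : Fin n → Fin m → R) (a : Fin n → R),
    (∀ k, a k ∈ Set.centralizer S) ∧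
    ∀ (N : Type v) [AddCommGroup N] (φ : R →+ R →+ N), IsBalanced S φ →
      (∀ (k : Fin n) (r : R),
        (∑ i, φ (r * x k i) (y k i)) = ∑ i, φ (x k i) (y k i * r)) ∧
      (∑ k, ∑ i, φ (a k * x k i) (y k i)) = φ 1 1

/-- The subring `A` of `R` is a separable extension of the subring `S ⊆ A`:
there is `z = Σ_i x_i ⊗ y_i ∈ A ⊗_S A` with `Σ_i x_i y_i = 1` and `a z = z a`
for all `a ∈ A`. -/
def SubSepOver (A : Subring R) (S : Set R) : Prop :=
  ∃ (n : ℕ) (x y : Fin n → A), (∑ i, (x i : R) * (y i : R)) = 1 ∧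
    ∀ (N : Type v) [AddCommGroup N] (φ : A →+ A →+ N),
      (∀ u v s : A, (s : R) ∈ S → φ (u * s) v = φ u (s * v)) →
      ∀ a : A, (∑ i, φ (a * x i) (y i)) = ∑ i, φ (x i) (y i * a)

end Sep

/-- `R` satisfies the fundamental theorem: the Galois map `θ : H ↦ R^{β_H}` is a
bijection from the set of wide subgroupoids of `G` onto the set of subalgebras of
`R` which are separable over `R^β`. -/
def SatisfiesFT {K : Type*} [CommRing K] {R : Type u} [Ring R] [Algebra K R]
    {G : Type*} [Fintype G] (gpd : Gpd G) (β : GpdAct K R gpd) : Prop :=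
  (∀ H : Set G, gpd.IsWide H → ∃ A : Subring R, (A : Set R) = fixedSet gpd β H ∧
      fixedSet gpd β Set.univ ⊆ (A : Set R) ∧
      SubSepOver.{u, v} A (fixedSet gpd β Set.univ)) ∧
  (∀ H L : Set G, gpd.IsWide H → gpd.IsWide L →
      fixedSet gpd β H = fixedSet gpd β L → H = L) ∧
  (∀ A : Subring R, fixedSet gpd β Set.univ ⊆ (A : Set R) →
      SubSepOver.{u, v} A (fixedSet gpd β Set.univ) →
      ∃ H : Set G, gpd.IsWide H ∧ fixedSet gpd β H = (A : Set R))


section AuxProof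

variable {K : Type*} [CommRing K] {R : Type*} [Ring R] [Algebra K R]
  {G : Type*} {gpd : Gpd G}

lemma act_zero' (β : GpdAct K R gpd) (u : G) :
    β.act u (0 * β.one (gpd.inv u)) = 0 := by
  have h := β.act_add u 0 0
  rw [add_zero] at h
  exact left_eq_add.mp h

lemma act_sum' (β : GpdAct K R gpd) (u : G) {ι : Type*} (s : Finset ι) (f : ι → R) :
    β.act u ((∑ i ∈ s, f i) * β.one (gpd.inv u)) =
      ∑ i ∈ s, β.act u (f i * β.one (gpd.inv u)) := by
  classical
  induction s using Finset.induction_on with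
  | empty => simpa using act_zero' β u
  | insert _ _ hx ih =>
      rw [Finset.sum_insert hx, Finset.sum_insert hx, β.act_add, ih]

end AuxProof

/-- Lemma 3.6: for any subgroupoid `H` of `G`, the map `σ : h ↦ J_h`
is injective on `S_H = {h ∈ H | J_h ≠ 0}`. -/
theorem sigma_injective_on_SH {K : Type*} [CommRing K] {R : Type*} [Ring R]
    [Algebra K R] {G : Type*} [Fintype G] [Nonempty G]
    (gpd : Gpd G) (β : GpdAct K R gpd)
    (hdec : IsDecomp gpd β) (hgal : IsGaloisExt gpd β)
    (H : Set G) (hH : gpd.IsSubgpd H) :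
    ∀ g ∈ H, ∀ h ∈ H, Jset gpd β g = Jset gpd β h → Jset gpd β g ≠ {0} → g = h := by
  intro g hg h hh hJ hne
  classical
  obtain ⟨n, x, y, hxy⟩ := hgal
  have h0 : (0:R) ∈ Jset gpd β g := ⟨by rw [zero_mul], fun z => by rw [zero_mul, mul_zero]⟩
  obtain ⟨t, ht, htne⟩ : ∃ t, t ∈ Jset gpd β g ∧ t ≠ 0 := by
    by_contra hc
    push_neg at hc
    exact hne (Set.eq_singleton_iff_unique_mem.mpr ⟨h0, hc⟩)
  have hth : t ∈ Jset gpd β h := hJ ▸ ht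
  obtain ⟨ht1, ht2⟩ := ht
  obtain ⟨hth1, hth2⟩ := hth
  -- basic identity facts
  have hrg_idt : gpd.r g ∈ gpd.idts := ⟨gpd.inv g, gpd.d_inv g⟩
  have hrh_idt : gpd.r h ∈ gpd.idts := ⟨gpd.inv h, gpd.d_inv h⟩
  have hdg_idt : gpd.d g ∈ gpd.idts := ⟨g, rfl⟩
  have hdh_idt : gpd.d h ∈ gpd.idts := ⟨h, rfl⟩
  have one_inv_g : β.one (gpd.inv g) = β.one (gpd.d g) := by
    rw [β.one_r (gpd.inv g), gpd.r_inv]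
  have one_inv_h : β.one (gpd.inv h) = β.one (gpd.d h) := by
    rw [β.one_r (gpd.inv h), gpd.r_inv]
  -- r g = r h
  have hrgh : gpd.r g = gpd.r h := by
    by_contra hner
    have horth := hdec.2 (gpd.r g) (gpd.r h) hrg_idt hrh_idt hner
    have : t = 0 := by
      have : t = t * (β.one (gpd.r g) * β.one (gpd.r h)) := by
        rw [← mul_assoc, ← β.one_r g, ht1, ← β.one_r h, hth1]
      rw [horth, mul_zero] at this
      exact this
    exact htne this
  -- 1_{d g} * t = t
  have hdt : ∀ u : G, (t * β.one u = t) →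
      (∀ z : R, t * β.act u (z * β.one (gpd.inv u)) = z * t) →
      β.one (gpd.d u) * t = t := by
    intro u hu1 hu2
    have h1 : β.one (gpd.d u) * β.one (gpd.inv u) = β.one (gpd.inv u) := by
      rw [β.one_r (gpd.inv u), gpd.r_inv, β.one_idem]
    have := hu2 (β.one (gpd.d u))
    rw [h1, β.act_unit, hu1] at this
    exact this.symm
  have hdgt : β.one (gpd.d g) * t = t := hdt g ht1 ht2
  have hdht : β.one (gpd.d h) * t = t := hdt h hth1 hth2
  -- d g = d h
  have hdgh : gpd.d g = gpd.d h := by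
    by_contra hned
    have horth := hdec.2 (gpd.d g) (gpd.d h) hdg_idt hdh_idt hned
    have : t = 0 := by
      have : β.one (gpd.d g) * (β.one (gpd.d h) * t) = t := by rw [hdht, hdgt]
      rw [← mul_assoc, horth, zero_mul] at this
      exact this.symm
    exact htne this
  -- key commuting relation: t * z = β_{g⁻¹}(z 1_g) * t
  have htz : ∀ z : R, t * z = β.act (gpd.inv g) (z * β.one g) * t := by
    intro z
    have hmem := β.act_mem (gpd.inv g) z
    rw [gpd.inv_inv] at hmem
    have hcomp := β.act_comp g (gpd.inv g) z (gpd.r_inv g).symm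
    rw [gpd.inv_inv, gpd.mul_inv] at hcomp
    -- hcomp : act g (act (inv g) (z * one g) * one (inv g)) = act (r g) (z * one g)
    have hid : β.act (gpd.r g) (z * β.one g) = z * β.one g := by
      have := β.act_id (gpd.inv g) z
      rw [gpd.d_inv] at this
      rw [β.one_r g]
      exact this
    have h2 := ht2 (β.act (gpd.inv g) (z * β.one g))
    rw [hcomp, hid] at h2
    -- h2 : t * (z * one g) = act (inv g) (z * one g) * t
    calc t * z = t * β.one g * z := by rw [ht1]
      _ = t * (z * β.one g) := by rw [mul_assoc, β.one_central]
      _ = β.act (gpd.inv g) (z * β.one g) * t := h2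
  -- set l = h * g⁻¹
  set l : G := gpd.mul h (gpd.inv g) with hl
  have hcompl : gpd.d h = gpd.r (gpd.inv g) := by rw [gpd.r_inv, hdgh]
  have hdl : gpd.d l = gpd.r g := by
    rw [hl, gpd.d_mul h (gpd.inv g) hcompl, gpd.d_inv]
  have one_inv_l : β.one (gpd.inv l) = β.one g := by
    rw [β.one_r (gpd.inv l), gpd.r_inv, hdl, ← β.one_r g]
  -- t * β_l(z 1_{l⁻¹}) = t * z
  have htl : ∀ z : R, t * β.act l (z * β.one (gpd.inv l)) = t * z := by
    intro z
    have hcomp := β.act_comp h (gpd.inv g) z hcompl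
    rw [gpd.inv_inv] at hcomp
    -- hcomp : act h (act (inv g) (z * one g) * one (inv h)) = act (mul h (inv g)) (z * one g)
    have h2 := hth2 (β.act (gpd.inv g) (z * β.one g))
    rw [hcomp] at h2
    -- h2 : t * act (mul h (inv g)) (z * one g) = act (inv g) (z * one g) * t
    rw [one_inv_l, hl, h2]
    exact (htz z).symm
  -- Galois: ∑ x_i y_i 1_g = 1_g
  have hsum1 : (∑ i, x i * y i * β.one g) = β.one g := by
    have hgal_e := hxy (gpd.r g)
    rw [if_pos hrg_idt] at hgal_e
    have hinvr : gpd.inv (gpd.r g) = gpd.r g := by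
      conv_lhs => rw [← gpd.d_inv g]
      rw [gpd.inv_d, gpd.d_inv]
    have hid : ∀ i, β.act (gpd.r g) (y i * β.one (gpd.inv (gpd.r g))) =
        y i * β.one (gpd.r g) := by
      intro i
      rw [hinvr]
      have := β.act_id (gpd.inv g) (y i)
      rw [gpd.d_inv] at this
      exact this
    calc (∑ i, x i * y i * β.one g) = ∑ i, x i * (y i * β.one (gpd.r g)) := by
          refine Finset.sum_congr rfl fun i _ => ?_
          rw [mul_assoc, β.one_r g]
      _ = ∑ i, x i * β.act (gpd.r g) (y i * β.one (gpd.inv (gpd.r g))) := by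
          refine Finset.sum_congr rfl fun i _ => ?_
          rw [hid i]
      _ = β.one (gpd.r g) := hgal_e
      _ = β.one g := (β.one_r g).symm
  -- l is an identity
  have hl_idt : l ∈ gpd.idts := by
    by_contra hlni
    have hgal_l := hxy l
    rw [if_neg hlni] at hgal_l
    have hzero : t * (∑ i, x i * β.act l (y i * β.one (gpd.inv l))) = 0 := by
      rw [hgal_l, mul_zero]
    have hstep : ∀ i : Fin n, t * (x i * β.act l (y i * β.one (gpd.inv l))) =
        β.act (gpd.inv g) (x i * y i * β.one g) * t := by
      intro i
      have hmul := β.act_mul (gpd.inv g) (x i) (y i)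
      rw [gpd.inv_inv] at hmul
      calc t * (x i * β.act l (y i * β.one (gpd.inv l)))
          = t * x i * β.act l (y i * β.one (gpd.inv l)) := (mul_assoc _ _ _).symm
        _ = β.act (gpd.inv g) (x i * β.one g) * t * β.act l (y i * β.one (gpd.inv l)) := by
            rw [htz (x i)]
        _ = β.act (gpd.inv g) (x i * β.one g) * (t * β.act l (y i * β.one (gpd.inv l))) :=
            mul_assoc _ _ _
        _ = β.act (gpd.inv g) (x i * β.one g) * (t * y i) := by rw [htl (y i)]
        _ = β.act (gpd.inv g) (x i * β.one g) * (β.act (gpd.inv g) (y i * β.one g) * t) := by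
            rw [htz (y i)]
        _ = β.act (gpd.inv g) (x i * β.one g) * β.act (gpd.inv g) (y i * β.one g) * t :=
            (mul_assoc _ _ _).symm
        _ = β.act (gpd.inv g) (x i * y i * β.one g) * t := by rw [← hmul]
    have : β.act (gpd.inv g) ((∑ i, x i * y i) * β.one g) * t = 0 := by
      have hsum : β.act (gpd.inv g) ((∑ i, x i * y i) * β.one g) =
          ∑ i, β.act (gpd.inv g) (x i * y i * β.one g) := by
        have := act_sum' β (gpd.inv g) (Finset.univ : Finset (Fin n)) (fun i => x i * y i)
        rw [gpd.inv_inv] at this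
        exact this
      rw [hsum, Finset.sum_mul]
      calc (∑ i, β.act (gpd.inv g) (x i * y i * β.one g) * t)
          = ∑ i, t * (x i * β.act l (y i * β.one (gpd.inv l))) := by
            refine Finset.sum_congr rfl fun i _ => (hstep i).symm
        _ = t * (∑ i, x i * β.act l (y i * β.one (gpd.inv l))) := by rw [Finset.mul_sum]
        _ = 0 := hzero
    have hxy1 : (∑ i, x i * y i) * β.one g = β.one g := by
      rw [Finset.sum_mul]
      exact hsum1
    rw [hxy1] at this
    have hact1 : β.act (gpd.inv g) (β.one g) = β.one (gpd.inv g) := by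
      have := β.act_unit (gpd.inv g)
      rw [gpd.inv_inv] at this
      exact this
    rw [hact1, one_inv_g, hdgt] at this
    exact htne this
  -- l = r g, finish
  obtain ⟨m, hm⟩ := hl_idt
  have hlrg : l = gpd.r g := by
    have : gpd.d l = l := by rw [← hm, gpd.d_d]
    rw [← this, hdl]
  have : gpd.mul l g = h := by
    rw [hl, gpd.assoc h (gpd.inv g) g hcompl (gpd.d_inv g),
      gpd.inv_mul, hdgh, gpd.mul_d]
  rw [hlrg, gpd.r_mul_self] at this
  exact this
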